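/- Suppose Z is binary, E[Z | X] = Xα is linear in X, and both the reduced-form and first-stage coefficients on Z exist, with ω(X) = E[D | Z=1, X] − E[D | Z=0, X] satisfying E[Var[Z|X]·ω(X)] ≠ 0. Then the linear IV estimand β_IV (the ratio of the coefficient on Z in the linear projection of Y on (Z,X) to the coefficient on Z in the linear projection of D on (Z,X)) equals E[Var[Z|X] · ω(X) · β(X)] / E[Var[Z|X] · ω(X)], where β(X) = φ(X)/ω(X) with φ(X) = E[Y | Z=1, X] − E[Y | Z=0, X]. -/

import Mathlib

open Finset

section Defs

variable {Ω 𝓧 : Type*} [Fintype Ω]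

/-- Expectation of `f` under weights `p` on a finite outcome space. -/
noncomputable def pexp (p : Ω → ℝ) (f : Ω → ℝ) : ℝ := ∑ ω, p ω * f ω

open Classical in
/-- Probability of the event `A` under weights `p`. -/
noncomputable def pprob (p : Ω → ℝ) (A : Ω → Prop) : ℝ := ∑ ω, if A ω then p ω else 0

open Classical in
/-- Conditional expectation of `f` given the event `A`. -/
noncomputable def eexp (p : Ω → ℝ) (A : Ω → Prop) (f : Ω → ℝ) : ℝ :=
  (∑ ω, if A ω then p ω * f ω else 0) / pprob p A

/-- Conditional probability of `A` given `B`. -/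
noncomputable def cprob (p : Ω → ℝ) (A B : Ω → Prop) : ℝ :=
  pprob p (fun ω => A ω ∧ B ω) / pprob p B

/-- `p` is a probability vector. -/
def IsProb (p : Ω → ℝ) : Prop := (∀ ω, 0 ≤ p ω) ∧ ∑ ω, p ω = 1

/-- Conditional expectation of `f` given `X = x`. -/
noncomputable def condMean (p : Ω → ℝ) (X : Ω → 𝓧) (f : Ω → ℝ) (x : 𝓧) : ℝ :=
  eexp p (fun ω => X ω = x) f

/-- Conditional expectation of `f` given `X = x` and `Z = z`. -/
noncomputable def condMeanOn (p : Ω → ℝ) (X : Ω → 𝓧) (Z : Ω → ℝ) (f : Ω → ℝ) (x : 𝓧) (z : ℝ) : ℝ :=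
  eexp p (fun ω => X ω = x ∧ Z ω = z) f

/-- Conditional cslope coefficient `E[f | Z=1, X=x] - E[f | Z=0, X=x]`. -/
noncomputable def cslope (p : Ω → ℝ) (X : Ω → 𝓧) (Z : Ω → ℝ) (f : Ω → ℝ) (x : 𝓧) : ℝ :=
  condMeanOn p X Z f x 1 - condMeanOn p X Z f x 0

/-- Conditional variance of `f` given the event `A`. -/
noncomputable def evVar (p : Ω → ℝ) (A : Ω → Prop) (f : Ω → ℝ) : ℝ :=
  eexp p A (fun ω => (f ω - eexp p A f) ^ 2)

/-- Conditional variance of `f` given `X = x`. -/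
noncomputable def condVar (p : Ω → ℝ) (X : Ω → 𝓧) (f : Ω → ℝ) (x : 𝓧) : ℝ :=
  evVar p (fun ω => X ω = x) f

end Defs

section Aux

variable {Ω : Type*} [Fintype Ω] {k : ℕ}

open Classical in
noncomputable def SIf (p : Ω → ℝ) (A : Ω → Prop) (f : Ω → ℝ) : ℝ :=
  ∑ ω, if A ω then p ω * f ω else 0

lemma eexp_eq (p : Ω → ℝ) (A : Ω → Prop) (f : Ω → ℝ) :
    eexp p A f = SIf p A f / pprob p A := rfl

lemma pprob_nonneg (p : Ω → ℝ) (hp0 : ∀ ω, 0 ≤ p ω) (A : Ω → Prop) : 0 ≤ pprob p A := by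
  classical
  unfold pprob
  apply Finset.sum_nonneg
  intro ω _
  split_ifs
  exacts [hp0 ω, le_rfl]

open Classical in
lemma le_pprob_single (p : Ω → ℝ) (hp0 : ∀ ω, 0 ≤ p ω) (A : Ω → Prop) (ω : Ω) (hA : A ω) :
    p ω ≤ pprob p A := by
  unfold pprob
  have h := Finset.single_le_sum (f := fun ω' => if A ω' then p ω' else 0)
    (fun i _ => by by_cases h : A i <;> simp [h, hp0 i]) (Finset.mem_univ ω)
  simpa [hA] using h

lemma SIf_congr {p : Ω → ℝ} {A : Ω → Prop} {f g : Ω → ℝ} (h : ∀ ω, A ω → f ω = g ω) :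
    SIf p A f = SIf p A g := by
  unfold SIf
  apply Finset.sum_congr rfl
  intro ω _
  by_cases hA : A ω
  · simp [hA, h ω hA]
  · simp [hA]

lemma SIf_const (p : Ω → ℝ) (A : Ω → Prop) (c : ℝ) :
    SIf p A (fun _ => c) = c * pprob p A := by
  unfold SIf pprob
  rw [Finset.mul_sum]
  apply Finset.sum_congr rfl
  intro ω _
  split_ifs <;> ring

lemma SIf_smul (p : Ω → ℝ) (A : Ω → Prop) (c : ℝ) (f : Ω → ℝ) :
    SIf p A (fun ω => c * f ω) = c * SIf p A f := by
  unfold SIf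
  rw [Finset.mul_sum]
  apply Finset.sum_congr rfl
  intro ω _
  split_ifs <;> ring

lemma SIf_sub (p : Ω → ℝ) (A : Ω → Prop) (f g : Ω → ℝ) :
    SIf p A (fun ω => f ω - g ω) = SIf p A f - SIf p A g := by
  unfold SIf
  rw [← Finset.sum_sub_distrib]
  apply Finset.sum_congr rfl
  intro ω _
  split_ifs <;> ring

lemma SIf_of_prob_zero {p : Ω → ℝ} (hp0 : ∀ ω, 0 ≤ p ω) {A : Ω → Prop}
    (h : pprob p A = 0) (f : Ω → ℝ) : SIf p A f = 0 := by
  classical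
  have h0 : ∀ ω ∈ Finset.univ (α := Ω), (if A ω then p ω else 0) = 0 := by
    rw [← Finset.sum_eq_zero_iff_of_nonneg]
    · exact h
    · intro ω _
      split_ifs
      exacts [hp0 ω, le_rfl]
  unfold SIf
  apply Finset.sum_eq_zero
  intro ω _
  by_cases hA : A ω
  · have := h0 ω (Finset.mem_univ ω)
    simp only [hA, if_true] at this ⊢
    rw [this, zero_mul]
  · simp [hA]

lemma SIf_split {p : Ω → ℝ} {Z : Ω → ℝ} (hZ : ∀ ω, Z ω = 0 ∨ Z ω = 1)
    (A : Ω → Prop) (f : Ω → ℝ) :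
    SIf p A f = SIf p (fun ω => A ω ∧ Z ω = 1) f + SIf p (fun ω => A ω ∧ Z ω = 0) f := by
  unfold SIf
  rw [← Finset.sum_add_distrib]
  apply Finset.sum_congr rfl
  intro ω _
  rcases hZ ω with h | h <;> by_cases hA : A ω <;> simp [h, hA]

lemma pprob_split {p : Ω → ℝ} {Z : Ω → ℝ} (hZ : ∀ ω, Z ω = 0 ∨ Z ω = 1)
    (A : Ω → Prop) :
    pprob p A = pprob p (fun ω => A ω ∧ Z ω = 1) + pprob p (fun ω => A ω ∧ Z ω = 0) := by
  have h := SIf_split (p := p) hZ A (fun _ => 1)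
  rw [SIf_const, SIf_const, SIf_const] at h
  simpa using h

lemma SIf_Z {p : Ω → ℝ} {Z : Ω → ℝ} (hZ : ∀ ω, Z ω = 0 ∨ Z ω = 1) (A : Ω → Prop) :
    SIf p A Z = pprob p (fun ω => A ω ∧ Z ω = 1) := by
  rw [SIf_split hZ]
  have h1 : SIf p (fun ω => A ω ∧ Z ω = 1) Z = SIf p (fun ω => A ω ∧ Z ω = 1) (fun _ => 1) :=
    SIf_congr fun ω h => h.2
  have h0 : SIf p (fun ω => A ω ∧ Z ω = 0) Z = SIf p (fun ω => A ω ∧ Z ω = 0) (fun _ => 0) :=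
    SIf_congr fun ω h => h.2
  rw [h1, h0, SIf_const, SIf_const]
  ring

open Classical in
lemma pexp_fibers (p : Ω → ℝ) (X : Ω → Fin k → ℝ) (G : Ω → ℝ) :
    pexp p G = ∑ x ∈ Finset.univ.image X, SIf p (fun ω => X ω = x) G := by
  classical
  unfold pexp SIf
  rw [Finset.sum_comm]
  refine Finset.sum_congr rfl fun ω _ => ?_
  rw [Finset.sum_eq_single (X ω)]
  · simp
  · intro b _ hb
    rw [if_neg fun h => hb h.symm]
  · intro hmem
    exact absurd (Finset.mem_image_of_mem X (Finset.mem_univ ω)) hmem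

lemma pexp_add (p f g : Ω → ℝ) : pexp p (fun ω => f ω + g ω) = pexp p f + pexp p g := by
  unfold pexp
  rw [← Finset.sum_add_distrib]
  exact Finset.sum_congr rfl fun ω _ => by ring

lemma pexp_sub (p f g : Ω → ℝ) : pexp p (fun ω => f ω - g ω) = pexp p f - pexp p g := by
  unfold pexp
  rw [← Finset.sum_sub_distrib]
  exact Finset.sum_congr rfl fun ω _ => by ring

lemma pexp_smul (p : Ω → ℝ) (c : ℝ) (f : Ω → ℝ) :
    pexp p (fun ω => c * f ω) = c * pexp p f := by
  unfold pexp
  rw [Finset.mul_sum]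
  exact Finset.sum_congr rfl fun ω _ => by ring

lemma pexp_congr {p f g : Ω → ℝ} (h : ∀ ω, f ω = g ω) : pexp p f = pexp p g := by
  unfold pexp
  exact Finset.sum_congr rfl fun ω _ => by rw [h]

lemma pexp_nonneg (p : Ω → ℝ) (hp0 : ∀ ω, 0 ≤ p ω) (f : Ω → ℝ) (hf : ∀ ω, 0 ≤ f ω) :
    0 ≤ pexp p f :=
  Finset.sum_nonneg fun ω _ => mul_nonneg (hp0 ω) (hf ω)

/-- Fiberwise main identity. -/
lemma fiber_main (p : Ω → ℝ) (hp : IsProb p) (X : Ω → Fin k → ℝ) (Z : Ω → ℝ)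
    (hZ : ∀ ω, Z ω = 0 ∨ Z ω = 1) (α : Fin k → ℝ)
    (hlin : ∀ x : Fin k → ℝ, 0 < pprob p (fun ω => X ω = x) →
      condMean p X Z x = ∑ j, x j * α j)
    (f : Ω → ℝ) (x : Fin k → ℝ) :
    SIf p (fun ω => X ω = x) (fun ω => f ω * (Z ω - ∑ j, X ω j * α j)) =
      SIf p (fun ω => X ω = x) (fun ω => condVar p X Z (X ω) * cslope p X Z f (X ω)) := by
  by_cases hS0 : pprob p (fun ω => X ω = x) = 0
  · rw [SIf_of_prob_zero hp.1 hS0, SIf_of_prob_zero hp.1 hS0]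
  have hS0pos : 0 < pprob p (fun ω => X ω = x) :=
    lt_of_le_of_ne (pprob_nonneg p hp.1 _) (Ne.symm hS0)
  set π : ℝ := ∑ j, x j * α j with hπ
  set S0 := pprob p (fun ω => X ω = x) with hS0def
  set P1 := pprob p (fun ω => X ω = x ∧ Z ω = 1) with hP1def
  set P0 := pprob p (fun ω => X ω = x ∧ Z ω = 0) with hP0def
  set N1 := SIf p (fun ω => X ω = x ∧ Z ω = 1) f with hN1def
  set N0 := SIf p (fun ω => X ω = x ∧ Z ω = 0) f with hN0def
  have hsum : S0 = P1 + P0 := pprob_split hZ _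
  -- conditional mean of Z is π
  have hmean : eexp p (fun ω => X ω = x) Z = π := hlin x hS0pos
  have hP1 : P1 = π * S0 := by
    have : SIf p (fun ω => X ω = x) Z = P1 := SIf_Z hZ _
    rw [eexp_eq, this, ← hS0def] at hmean
    field_simp at hmean
    linarith [hmean]
  have hP0 : P0 = (1 - π) * S0 := by
    rw [hsum] at hP1 ⊢
    ring_nf
    ring_nf at hP1
    linarith
  -- conditional variance is π (1 - π)
  have hVar : condVar p X Z x = π * (1 - π) := by
    unfold condVar evVar
    rw [show eexp p (fun ω => X ω = x) Z = π from hmean]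
    rw [eexp_eq, ← hS0def]
    have hnum : SIf p (fun ω => X ω = x) (fun ω => (Z ω - π) ^ 2)
        = (1 - π) ^ 2 * P1 + π ^ 2 * P0 := by
      rw [SIf_split hZ]
      have h1 : SIf p (fun ω => X ω = x ∧ Z ω = 1) (fun ω => (Z ω - π) ^ 2)
          = SIf p (fun ω => X ω = x ∧ Z ω = 1) (fun _ => (1 - π) ^ 2) :=
        SIf_congr fun ω h => by rw [h.2]
      have h0 : SIf p (fun ω => X ω = x ∧ Z ω = 0) (fun ω => (Z ω - π) ^ 2)
          = SIf p (fun ω => X ω = x ∧ Z ω = 0) (fun _ => π ^ 2) :=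
        SIf_congr fun ω h => by rw [h.2]; ring
      rw [h1, h0, SIf_const, SIf_const]
    rw [hnum, hP1, hP0]
    field_simp
    ring
  -- cslope
  have hcs : cslope p X Z f x = N1 / P1 - N0 / P0 := rfl
  -- RHS
  have hRHS : SIf p (fun ω => X ω = x) (fun ω => condVar p X Z (X ω) * cslope p X Z f (X ω))
      = (π * (1 - π) * (N1 / P1 - N0 / P0)) * S0 := by
    have : SIf p (fun ω => X ω = x) (fun ω => condVar p X Z (X ω) * cslope p X Z f (X ω))
        = SIf p (fun ω => X ω = x) (fun _ => π * (1 - π) * (N1 / P1 - N0 / P0)) :=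
      SIf_congr fun ω h => by rw [h, hVar, hcs]
    rw [this, SIf_const]
  -- LHS
  have hLHS : SIf p (fun ω => X ω = x) (fun ω => f ω * (Z ω - ∑ j, X ω j * α j))
      = (1 - π) * N1 + (-π) * N0 := by
    have hx : SIf p (fun ω => X ω = x) (fun ω => f ω * (Z ω - ∑ j, X ω j * α j))
        = SIf p (fun ω => X ω = x) (fun ω => f ω * (Z ω - π)) :=
      SIf_congr fun ω h => by rw [hπ]; rw [h]
    rw [hx, SIf_split hZ]
    have h1 : SIf p (fun ω => X ω = x ∧ Z ω = 1) (fun ω => f ω * (Z ω - π))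
        = SIf p (fun ω => X ω = x ∧ Z ω = 1) (fun ω => (1 - π) * f ω) :=
      SIf_congr fun ω h => by rw [h.2]; ring
    have h0 : SIf p (fun ω => X ω = x ∧ Z ω = 0) (fun ω => f ω * (Z ω - π))
        = SIf p (fun ω => X ω = x ∧ Z ω = 0) (fun ω => (-π) * f ω) :=
      SIf_congr fun ω h => by rw [h.2]; ring
    rw [h1, h0, SIf_smul, SIf_smul]
  rw [hLHS, hRHS]
  by_cases hπ0 : π = 0
  · have hP1z : P1 = 0 := by rw [hP1, hπ0]; ring
    have hN1z : N1 = 0 := SIf_of_prob_zero hp.1 hP1z f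
    rw [hπ0, hN1z]
    ring
  by_cases hπ1 : π = 1
  · have hP0z : P0 = 0 := by rw [hP0, hπ1]; ring
    have hN0z : N0 = 0 := SIf_of_prob_zero hp.1 hP0z f
    rw [hπ1, hN0z]
    ring
  · have hP1ne : P1 ≠ 0 := by rw [hP1]; exact mul_ne_zero hπ0 hS0
    have h1π : (1:ℝ) - π ≠ 0 := sub_ne_zero.mpr (Ne.symm hπ1)
    rw [hP1, hP0]
    field_simp
    ring

end Aux

section Main

variable {Ω : Type*} [Fintype Ω] {k : ℕ}

/-- Angrist covariance identity: `E[f · (Z - Xα)] = E[Var(Z|X) · cslope f (X)]`. -/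
lemma key_L2 (p : Ω → ℝ) (hp : IsProb p) (X : Ω → Fin k → ℝ) (Z : Ω → ℝ)
    (hZ : ∀ ω, Z ω = 0 ∨ Z ω = 1) (α : Fin k → ℝ)
    (hlin : ∀ x : Fin k → ℝ, 0 < pprob p (fun ω => X ω = x) →
      condMean p X Z x = ∑ j, x j * α j)
    (f : Ω → ℝ) :
    pexp p (fun ω => f ω * (Z ω - ∑ j, X ω j * α j)) =
      pexp p (fun ω => condVar p X Z (X ω) * cslope p X Z f (X ω)) := by
  classical
  rw [pexp_fibers p X, pexp_fibers p X]
  apply Finset.sum_congr rfl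
  intro x _
  exact fiber_main p hp X Z hZ α hlin f x

/-- Orthogonality: `E[h(X) · (Z - Xα)] = 0`. -/
lemma key_orth (p : Ω → ℝ) (hp : IsProb p) (X : Ω → Fin k → ℝ) (Z : Ω → ℝ)
    (hZ : ∀ ω, Z ω = 0 ∨ Z ω = 1) (α : Fin k → ℝ)
    (hlin : ∀ x : Fin k → ℝ, 0 < pprob p (fun ω => X ω = x) →
      condMean p X Z x = ∑ j, x j * α j)
    (h : (Fin k → ℝ) → ℝ) :
    pexp p (fun ω => h (X ω) * (Z ω - ∑ j, X ω j * α j)) = 0 := by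
  classical
  rw [pexp_fibers p X]
  apply Finset.sum_eq_zero
  intro x _
  by_cases hS0 : pprob p (fun ω => X ω = x) = 0
  · exact SIf_of_prob_zero hp.1 hS0 _
  have hS0pos : 0 < pprob p (fun ω => X ω = x) :=
    lt_of_le_of_ne (pprob_nonneg p hp.1 _) (Ne.symm hS0)
  have hmean : eexp p (fun ω => X ω = x) Z = ∑ j, x j * α j := hlin x hS0pos
  set π : ℝ := ∑ j, x j * α j with hπ
  have hrw : SIf p (fun ω => X ω = x) (fun ω => h (X ω) * (Z ω - ∑ j, X ω j * α j))
      = SIf p (fun ω => X ω = x) (fun ω => h x * (Z ω - π)) :=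
    SIf_congr fun ω hx => by rw [hx, hπ]
  rw [hrw, SIf_smul, SIf_sub (f := Z) (g := fun _ => π), SIf_const, SIf_Z hZ]
  have hP1 : pprob p (fun ω => X ω = x ∧ Z ω = 1) = π * pprob p (fun ω => X ω = x) := by
    have hZval : SIf p (fun ω => X ω = x) Z = pprob p (fun ω => X ω = x ∧ Z ω = 1) :=
      SIf_Z hZ _
    rw [eexp_eq, hZval] at hmean
    field_simp at hmean
    linarith [hmean]
  rw [hP1]
  ring

/-- First-order condition for the least-squares minimizer. -/
lemma foc (p : Ω → ℝ) (hp : IsProb p) (X : Ω → Fin k → ℝ) (Z : Ω → ℝ)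
    (f : Ω → ℝ) (b : ℝ) (g : Fin k → ℝ)
    (hmin : ∀ (b' : ℝ) (g' : Fin k → ℝ),
      pexp p (fun ω => (f ω - Z ω * b - ∑ j, X ω j * g j) ^ 2) ≤
        pexp p (fun ω => (f ω - Z ω * b' - ∑ j, X ω j * g' j) ^ 2))
    (u : ℝ) (v : Fin k → ℝ) :
    pexp p (fun ω => (f ω - Z ω * b - ∑ j, X ω j * g j) *
      (Z ω * u + ∑ j, X ω j * v j)) = 0 := by
  classical
  set r : Ω → ℝ := fun ω => f ω - Z ω * b - ∑ j, X ω j * g j with hr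
  set s : Ω → ℝ := fun ω => Z ω * u + ∑ j, X ω j * v j with hs
  set A : ℝ := pexp p (fun ω => s ω ^ 2) with hA
  set B : ℝ := pexp p (fun ω => r ω * s ω) with hB
  have hAnn : 0 ≤ A := pexp_nonneg p hp.1 _ fun ω => sq_nonneg _
  have key : ∀ t : ℝ, 0 ≤ A * t ^ 2 - 2 * B * t := by
    intro t
    have h1 := hmin (b + t * u) (fun j => g j + t * v j)
    have h2 : pexp p (fun ω => (f ω - Z ω * (b + t * u) - ∑ j, X ω j * (g j + t * v j)) ^ 2)
        = pexp p (fun ω => r ω ^ 2) + (t ^ 2 * A - 2 * t * B) := by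
      have hpt : ∀ ω, (f ω - Z ω * (b + t * u) - ∑ j, X ω j * (g j + t * v j)) ^ 2
          = r ω ^ 2 + (t ^ 2 * s ω ^ 2 - 2 * t * (r ω * s ω)) := by
        intro ω
        have hsplit : ∑ j, X ω j * (g j + t * v j)
            = (∑ j, X ω j * g j) + t * ∑ j, X ω j * v j := by
          rw [Finset.mul_sum, ← Finset.sum_add_distrib]
          apply Finset.sum_congr rfl
          intro j _
          ring
        rw [hsplit]
        simp only [hr, hs]
        ring
      rw [pexp_congr hpt, pexp_add,
        pexp_sub p (fun ω => t ^ 2 * s ω ^ 2) (fun ω => 2 * t * (r ω * s ω)),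
        pexp_smul p (t ^ 2) (fun ω => s ω ^ 2), pexp_smul p (2 * t) (fun ω => r ω * s ω)]
    rw [h2] at h1
    nlinarith [h1]
  rcases eq_or_lt_of_le hAnn with hA0 | hApos
  · have hk := key B
    rw [← hA0] at hk
    nlinarith [sq_nonneg B]
  · have hk := key (B / A)
    have hne : A ≠ 0 := ne_of_gt hApos
    have heq : A * (B / A) ^ 2 - 2 * B * (B / A) = -(B ^ 2) / A := by
      field_simp
      ring
    rw [heq] at hk
    have h4 := mul_nonneg hk hApos.le
    rw [div_mul_cancel₀ _ hne] at h4
    have : B = 0 := by nlinarith [sq_nonneg B]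
    simpa [hB] using this

end Main

/-- with binary `Z`, `E[Z|X] = Xα` linear, and
`E[Var[Z|X]·ω(X)] ≠ 0`, the linear IV estimand — the ratio of the coefficient on
`Z` in the linear projection of `Y` on `(Z,X)` to the coefficient on `Z` in the
linear projection of `D` on `(Z,X)` — equals
`E[Var[Z|X]·ω(X)·β(X)] / E[Var[Z|X]·ω(X)]`, where `β(X) = φ(X)/ω(X)`. -/
theorem stmt5 {Ω : Type*} [Fintype Ω] {k : ℕ} (p : Ω → ℝ) (hp : IsProb p)
    (X : Ω → Fin k → ℝ) (Z Y D : Ω → ℝ) (hZ : ∀ ω, Z ω = 0 ∨ Z ω = 1)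
    (α : Fin k → ℝ)
    (hlin : ∀ x : Fin k → ℝ, 0 < pprob p (fun ω => X ω = x) →
      condMean p X Z x = ∑ j, x j * α j)
    (hrel : ∀ x : Fin k → ℝ, 0 < pprob p (fun ω => X ω = x) → cslope p X Z D x ≠ 0)
    (hden : pexp p (fun ω => condVar p X Z (X ω) * cslope p X Z D (X ω)) ≠ 0)
    (bY : ℝ) (gY : Fin k → ℝ)
    (hY : ∀ (b' : ℝ) (g' : Fin k → ℝ),
      pexp p (fun ω => (Y ω - Z ω * bY - ∑ j, X ω j * gY j) ^ 2) ≤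
        pexp p (fun ω => (Y ω - Z ω * b' - ∑ j, X ω j * g' j) ^ 2))
    (bD : ℝ) (gD : Fin k → ℝ)
    (hD : ∀ (b' : ℝ) (g' : Fin k → ℝ),
      pexp p (fun ω => (D ω - Z ω * bD - ∑ j, X ω j * gD j) ^ 2) ≤
        pexp p (fun ω => (D ω - Z ω * b' - ∑ j, X ω j * g' j) ^ 2)) :
    bY / bD =
      pexp p (fun ω => condVar p X Z (X ω) * cslope p X Z D (X ω) *
          (cslope p X Z Y (X ω) / cslope p X Z D (X ω))) /
        pexp p (fun ω => condVar p X Z (X ω) * cslope p X Z D (X ω)) := by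
  classical
  -- C = E[Z * (Z - Xα)]
  set C : ℝ := pexp p (fun ω => Z ω * (Z ω - ∑ j, X ω j * α j)) with hC
  -- key decomposition for a general regression
  have main : ∀ (f : Ω → ℝ) (b : ℝ) (g : Fin k → ℝ),
      (∀ (b' : ℝ) (g' : Fin k → ℝ),
        pexp p (fun ω => (f ω - Z ω * b - ∑ j, X ω j * g j) ^ 2) ≤
          pexp p (fun ω => (f ω - Z ω * b' - ∑ j, X ω j * g' j) ^ 2)) →
      pexp p (fun ω => condVar p X Z (X ω) * cslope p X Z f (X ω)) = b * C := by
    intro f b g hmin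
    have hfoc := foc p hp X Z f b g hmin 1 (fun j => -α j)
    have hpt : ∀ ω, (f ω - Z ω * b - ∑ j, X ω j * g j) *
        (Z ω * 1 + ∑ j, X ω j * (-α j))
        = f ω * (Z ω - ∑ j, X ω j * α j)
          - b * (Z ω * (Z ω - ∑ j, X ω j * α j))
          - (fun x : Fin k → ℝ => ∑ j, x j * g j) (X ω) * (Z ω - ∑ j, X ω j * α j) := by
      intro ω
      have hneg : ∑ j, X ω j * (-α j) = -∑ j, X ω j * α j := by
        rw [← Finset.sum_neg_distrib]
        exact Finset.sum_congr rfl fun j _ => by ring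
      simp only [hneg]
      ring
    rw [pexp_congr hpt,
      pexp_sub p _ (fun ω => (fun x : Fin k → ℝ => ∑ j, x j * g j) (X ω) *
        (Z ω - ∑ j, X ω j * α j)),
      pexp_sub p (fun ω => f ω * (Z ω - ∑ j, X ω j * α j))
        (fun ω => b * (Z ω * (Z ω - ∑ j, X ω j * α j))),
      pexp_smul p b (fun ω => Z ω * (Z ω - ∑ j, X ω j * α j)),
      key_orth p hp X Z hZ α hlin (fun x => ∑ j, x j * g j),
      key_L2 p hp X Z hZ α hlin f] at hfoc
    rw [← hC] at hfoc
    linarith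
  have hWy := main Y bY gY hY
  have hWd := main D bD gD hD
  -- numerator equals E[Var * cslope Y]
  have hnum : pexp p (fun ω => condVar p X Z (X ω) * cslope p X Z D (X ω) *
      (cslope p X Z Y (X ω) / cslope p X Z D (X ω)))
      = pexp p (fun ω => condVar p X Z (X ω) * cslope p X Z Y (X ω)) := by
    unfold pexp
    apply Finset.sum_congr rfl
    intro ω _
    by_cases hpω : p ω = 0
    · rw [hpω, zero_mul, zero_mul]
    · have hppos : 0 < p ω := lt_of_le_of_ne (hp.1 ω) (Ne.symm hpω)
      have hx : 0 < pprob p (fun ω' => X ω' = X ω) :=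
        lt_of_lt_of_le hppos (le_pprob_single p hp.1 _ ω rfl)
      have hD0 : cslope p X Z D (X ω) ≠ 0 := hrel (X ω) hx
      have hc : cslope p X Z D (X ω) * (cslope p X Z Y (X ω) / cslope p X Z D (X ω))
          = cslope p X Z Y (X ω) := by
        field_simp
      show p ω * (condVar p X Z (X ω) * cslope p X Z D (X ω) *
          (cslope p X Z Y (X ω) / cslope p X Z D (X ω)))
          = p ω * (condVar p X Z (X ω) * cslope p X Z Y (X ω))
      rw [mul_assoc (condVar p X Z (X ω)), hc]
  rw [hnum, hWy, hWd]
  have hbDC : bD * C ≠ 0 := by rw [← hWd]; exact hden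
  have hbD : bD ≠ 0 := fun h => hbDC (by rw [h, zero_mul])
  have hCne : C ≠ 0 := fun h => hbDC (by rw [h, mul_zero])
  rw [mul_div_mul_right _ _ hCne]
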